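/- Property (**) implies the existence of an (S**)-family: if there exists (g_α : ℕ → ω₁)_{α<ω₁} such that for every g : ℕ → ω₁, for all but countably many α there are infinitely many n with g(n) = g_α(n), then there exists a family (h_α : ℕ → ω₁)_{α<ω₁} such that for every infinite set X ⊆ ℕ and every function h : X → ω₁, for all but countably many α < ω₁ there are infinitely many n ∈ X with h(n) = h_α(n). -/

import Mathlib

open Cardinal Set

/-- ω₁, the first uncountable ordinal, viewed as the set of all countable ordinals. -/
abbrev Omega1 := {o : Ordinal.{0} // o < (Cardinal.aleph 1).ord}

namespace Sstar2Aux

instance : Infinite Omega1 := by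
  refine Infinite.of_injective (fun n : ℕ => (⟨(n : Ordinal), ?_⟩ : Omega1)) ?_
  · exact lt_of_lt_of_le (Ordinal.nat_lt_omega0 n)
      (Cardinal.omega0_le_ord.mpr (Cardinal.aleph0_le_aleph 1))
  · intro a b hab
    simpa using congrArg Subtype.val hab

lemma mk_list_pair : #(List (ℕ × Omega1)) = #Omega1 := by
  rw [Cardinal.mk_list_eq_mk, Cardinal.mk_prod, Cardinal.mk_nat,
    Cardinal.lift_aleph0, Cardinal.lift_id']
  exact Cardinal.mul_eq_right (Cardinal.aleph0_le_mk _)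
    ((Cardinal.aleph0_le_mk _)) Cardinal.aleph0_ne_zero

/-- A fixed equivalence coding lists of pairs by countable ordinals. -/
noncomputable def E : List (ℕ × Omega1) ≃ Omega1 :=
  (Cardinal.eq.mp mk_list_pair).some

/-- Greedy choice of distinct representatives: at stage `j`, if the decoded list
`ℓ j` contains a pair whose first coordinate was not used before, pick one. -/
noncomputable def picks (ℓ : ℕ → List (ℕ × Omega1)) : ℕ → List (ℕ × Omega1)
  | 0 => []
  | (j+1) => picks ℓ j ++
      (if h : ∃ p, p ∈ ℓ j ∧ p.1 ∉ (picks ℓ j).map Prod.fst then [h.choose] else [])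

lemma picks_length (ℓ : ℕ → List (ℕ × Omega1)) : ∀ j, (picks ℓ j).length ≤ j := by
  intro j
  induction j with
  | zero => simp [picks]
  | succ j ih =>
    rw [picks, List.length_append]
    split <;> simp <;> omega

lemma picks_mono (ℓ : ℕ → List (ℕ × Omega1)) {j j' : ℕ} (hj : j ≤ j') :
    ∀ p, p ∈ picks ℓ j → p ∈ picks ℓ j' := by
  induction j', hj using Nat.le_induction with
  | base => exact fun p hp => hp
  | succ n hn ih =>
    intro p hp
    rw [picks]
    exact List.mem_append_left _ (ih p hp)

lemma picks_fresh (ℓ : ℕ → List (ℕ × Omega1)) {j : ℕ} {p : ℕ × Omega1}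
    (hp : p ∈ picks ℓ (j+1)) (hnp : p ∉ picks ℓ j) :
    p ∈ ℓ j ∧ p.1 ∉ (picks ℓ j).map Prod.fst := by
  rw [picks] at hp
  rcases List.mem_append.mp hp with h1 | h1
  · exact absurd h1 hnp
  · split at h1
    · rename_i hcond
      simp only [List.mem_singleton] at h1
      subst h1
      exact ⟨hcond.choose_spec.1, hcond.choose_spec.2⟩
    · simp at h1

lemma picks_nodup (ℓ : ℕ → List (ℕ × Omega1)) : ∀ j, ((picks ℓ j).map Prod.fst).Nodup := by
  intro j
  induction j with
  | zero => simp [picks]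
  | succ j ih =>
    rw [picks, List.map_append, List.nodup_append]
    refine ⟨ih, ?_, ?_⟩
    · split <;> simp
    · intro a ha b hb
      split at hb
      · rename_i hcond
        simp only [List.map_cons, List.map_nil, List.mem_singleton] at hb
        rintro rfl
        exact hcond.choose_spec.2 (hb ▸ ha)
      · simp at hb

lemma picks_consistent (ℓ : ℕ → List (ℕ × Omega1)) {j j' : ℕ} {p q : ℕ × Omega1}
    (hp : p ∈ picks ℓ j) (hq : q ∈ picks ℓ j') (hpq : p.1 = q.1) : p = q := by
  have hp' := picks_mono ℓ (le_max_left j j') p hp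
  have hq' := picks_mono ℓ (le_max_right j j') q hq
  exact List.inj_on_of_nodup_map (picks_nodup ℓ (max j j')) hp' hq' hpq

open Classical in
/-- The guessing function decoded from a sequence of lists. -/
noncomputable def decodeFun (ℓ : ℕ → List (ℕ × Omega1)) (m : ℕ) : Omega1 :=
  if h : ∃ p : ℕ × Omega1, (∃ j, p ∈ picks ℓ j) ∧ p.1 = m then h.choose.2
  else Classical.arbitrary Omega1

lemma decodeFun_eq (ℓ : ℕ → List (ℕ × Omega1)) {j : ℕ} {p : ℕ × Omega1}
    (hp : p ∈ picks ℓ j) : decodeFun ℓ p.1 = p.2 := by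
  have hex : ∃ q : ℕ × Omega1, (∃ j, q ∈ picks ℓ j) ∧ q.1 = p.1 := ⟨p, ⟨j, hp⟩, rfl⟩
  rw [decodeFun, dif_pos hex]
  obtain ⟨⟨j', hq⟩, hq1⟩ := hex.choose_spec
  have := picks_consistent ℓ hq hp hq1
  rw [this]

/-- Pigeonhole: at a stage whose list has `j+1` distinct first coordinates,
the greedy construction succeeds and picks a fresh element of that list. -/
lemma picks_success (ℓ : ℕ → List (ℕ × Omega1)) {j : ℕ}
    (hlen : (ℓ j).length = j + 1) (hnd : ((ℓ j).map Prod.fst).Nodup) :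
    ∃ p, p ∈ picks ℓ (j+1) ∧ p ∈ ℓ j ∧ p.1 ∉ (picks ℓ j).map Prod.fst := by
  have hcond : ∃ p, p ∈ ℓ j ∧ p.1 ∉ (picks ℓ j).map Prod.fst := by
    by_contra hcon
    push_neg at hcon
    have hsub : (ℓ j).map Prod.fst ⊆ (picks ℓ j).map Prod.fst := by
      intro a ha
      obtain ⟨p, hp, rfl⟩ := List.mem_map.mp ha
      exact hcon p hp
    have hle := (hnd.subperm hsub).length_le
    rw [List.length_map, List.length_map, hlen] at hle
    have := picks_length ℓ j
    omega
  refine ⟨hcond.choose, ?_, hcond.choose_spec.1, hcond.choose_spec.2⟩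
  rw [picks, dif_pos hcond]
  exact List.mem_append_right _ (List.mem_singleton.mpr rfl)

end Sstar2Aux

open Sstar2Aux in
/-- Property (**) implies the existence of an (S**)-family. -/
theorem star2_implies_Sstar2
    (h : ∃ g : Omega1 → ℕ → Omega1,
      ∀ k : ℕ → Omega1, {α : Omega1 | {n : ℕ | k n = g α n}.Finite}.Countable) :
    ∃ hfam : Omega1 → ℕ → Omega1,
      ∀ X : Set ℕ, X.Infinite → ∀ k : ℕ → Omega1,
        {α : Omega1 | {n ∈ X | k n = hfam α n}.Finite}.Countable := by
  obtain ⟨g, hg⟩ := h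
  -- decoded lists for each α
  set ℓ : Omega1 → ℕ → List (ℕ × Omega1) := fun α j => E.symm (g α j) with hℓ
  refine ⟨fun α => decodeFun (ℓ α), ?_⟩
  intro X hX k
  -- enumeration of X
  set x : ℕ → ℕ := fun i => ((Set.Infinite.natEmbedding X hX) i).1 with hx
  have hxX : ∀ i, x i ∈ X := fun i => ((Set.Infinite.natEmbedding X hX) i).2
  have hxinj : Function.Injective x :=
    fun a b hab => (Set.Infinite.natEmbedding X hX).injective (Subtype.ext hab)
  -- the coded "true lists"
  set k' : ℕ → Omega1 :=
    fun j => E ((List.range (j+1)).map (fun i => (x i, k (x i)))) with hk'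
  refine (hg k').mono ?_
  intro α hα
  simp only [Set.mem_setOf_eq] at hα ⊢
  by_contra hfin
  have hSinf : {n : ℕ | k' n = g α n}.Infinite := hfin
  -- at every matching stage, the decoded list is the true list
  have hmatch : ∀ j ∈ {n : ℕ | k' n = g α n},
      ℓ α j = (List.range (j+1)).map (fun i => (x i, k (x i))) := by
    intro j hj
    simp only [Set.mem_setOf_eq] at hj
    show E.symm (g α j) = _
    rw [← hj]
    show E.symm (E _) = _
    rw [Equiv.symm_apply_apply]
  -- for each matching stage, pick the fresh representative
  have hpick : ∀ j ∈ {n : ℕ | k' n = g α n}, ∃ p : ℕ × Omega1,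
      p ∈ picks (ℓ α) (j+1) ∧ p.1 ∈ X ∧ k p.1 = p.2 ∧
      p.1 ∉ (picks (ℓ α) j).map Prod.fst := by
    intro j hj
    have hlist := hmatch j hj
    have hlen : (ℓ α j).length = j + 1 := by
      rw [hlist, List.length_map, List.length_range]
    have hnd : ((ℓ α j).map Prod.fst).Nodup := by
      rw [hlist, List.map_map]
      have heq : (Prod.fst ∘ fun i => (x i, k (x i))) = x := rfl
      rw [heq]
      exact List.nodup_range.map hxinj
    obtain ⟨p, hp1, hp2, hp3⟩ := picks_success (ℓ α) hlen hnd
    rw [hlist] at hp2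
    obtain ⟨i, _, rfl⟩ := List.mem_map.mp hp2
    exact ⟨_, hp1, hxX i, rfl, hp3⟩
  -- turn the choices into a function
  classical
  set f : ℕ → ℕ := fun j =>
    if hj : j ∈ {n : ℕ | k' n = g α n} then (hpick j hj).choose.1 else 0 with hf
  have hfj : ∀ j (hj : j ∈ {n : ℕ | k' n = g α n}), f j = (hpick j hj).choose.1 := by
    intro j hj
    simp only [hf, dif_pos hj]
  have hmaps : Set.MapsTo f {n : ℕ | k' n = g α n}
      {n | n ∈ X ∧ k n = decodeFun (ℓ α) n} := by
    intro j hj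
    obtain ⟨hp1, hp2, hp3, _⟩ := (hpick j hj).choose_spec
    have hdec := decodeFun_eq (ℓ α) hp1
    rw [Set.mem_setOf_eq, hfj j hj]
    exact ⟨hp2, hp3.trans hdec.symm⟩
  have key : ∀ a ∈ {n : ℕ | k' n = g α n}, ∀ b ∈ {n : ℕ | k' n = g α n},
      a < b → f a ≠ f b := by
    intro a ha b hb hlt hab
    obtain ⟨ha1, _, _, _⟩ := (hpick a ha).choose_spec
    obtain ⟨_, _, _, hb4⟩ := (hpick b hb).choose_spec
    have hmem : (hpick a ha).choose ∈ picks (ℓ α) b :=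
      picks_mono (ℓ α) (by omega) _ ha1
    apply hb4
    rw [hfj a ha, hfj b hb] at hab
    rw [← hab]
    exact List.mem_map.mpr ⟨_, hmem, rfl⟩
  have hinj : Set.InjOn f {n : ℕ | k' n = g α n} := by
    intro a ha b hb hab
    rcases lt_trichotomy a b with hc | hc | hc
    · exact absurd hab (key a ha b hb hc)
    · exact hc
    · exact absurd hab.symm (key b hb a ha hc)
  exact Set.infinite_of_injOn_mapsTo hinj hmaps hSinf hα
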